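/- A state ρ on ℂ² ⊗ ℂ² satisfies ⟨u⊗u| ρ |u⊗u⟩ = 0 for every unit vector u ∈ ℂ² if and only if ρ = |ψ⁻⟩⟨ψ⁻|. In other words, the singlet is the unique two-qubit state with the property that performing the same von Neumann measurement on each qubit always yields different outcomes, for every von Neumann measurement. -/

import Mathlib

open scoped Kronecker ComplexOrder
open Matrix

/-- The trace norm (Schatten 1-norm) of a complex matrix: `Tr √(Xᴴ X)`. -/
noncomputable def traceNorm {n : Type*} [Fintype n] [DecidableEq n] (X : Matrix n n ℂ) : ℝ :=
  (((Matrix.isHermitian_conjTranspose_mul_self X).eigenvectorUnitary : Matrix n n ℂ) *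
      Matrix.diagonal (fun i => ((Real.sqrt
        ((Matrix.isHermitian_conjTranspose_mul_self X).eigenvalues i) : ℝ) : ℂ)) *
      (star (Matrix.isHermitian_conjTranspose_mul_self X).eigenvectorUnitary :
        Matrix n n ℂ)).trace.re

/-- A quantum state: a positive semidefinite matrix with unit trace. -/
def IsState {n : Type*} [Fintype n] (ρ : Matrix n n ℂ) : Prop :=
  ρ.PosSemidef ∧ ρ.trace = 1

/-- The outer product `|v⟩⟨v|`. -/
def outer {n : Type*} (v : n → ℂ) : Matrix n n ℂ :=
  Matrix.of fun i j => v i * star (v j)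

/-- A unit vector. -/
def IsUnitVec {n : Type*} [Fintype n] (v : n → ℂ) : Prop :=
  ∑ i, star (v i) * v i = 1

/-- A bipartite separable state: a finite convex combination of tensor products of states. -/
def SeparableState {a b : Type*} [Fintype a] [Fintype b]
    (σ : Matrix (a × b) (a × b) ℂ) : Prop :=
  ∃ (m : ℕ) (p : Fin m → ℝ) (σA : Fin m → Matrix a a ℂ) (σB : Fin m → Matrix b b ℂ),
    (∀ y, 0 ≤ p y) ∧ (∑ y, p y = 1) ∧ (∀ y, IsState (σA y)) ∧ (∀ y, IsState (σB y)) ∧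
    σ = ∑ y, (p y : ℂ) • (σA y ⊗ₖ σB y)

/-- A maximally entangled unit vector `(1/√d) Σ_k |e_k⟩ ⊗ |f_k⟩` built from two
orthonormal bases `e`, `f` of `ℂ^d`. -/
def MaxEntangled {d : ℕ} (φ : Fin d × Fin d → ℂ) : Prop :=
  ∃ e f : Fin d → Fin d → ℂ,
    (∀ i j, ∑ x, star (e i x) * e j x = if i = j then (1 : ℂ) else 0) ∧
    (∀ i j, ∑ x, star (f i x) * f j x = if i = j then (1 : ℂ) else 0) ∧
    ∀ x, φ x = ((Real.sqrt d : ℂ))⁻¹ * ∑ k, e k x.1 * f k x.2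

/-- The singlet `|ψ⁻⟩ = (|0⟩⊗|1⟩ − |1⟩⊗|0⟩)/√2` in `ℂ² ⊗ ℂ²`. -/
noncomputable def singlet : Fin 2 × Fin 2 → ℂ := fun x =>
  if x = ((0 : Fin 2), (1 : Fin 2)) then ((Real.sqrt 2 : ℂ))⁻¹
  else if x = ((1 : Fin 2), (0 : Fin 2)) then -((Real.sqrt 2 : ℂ))⁻¹
  else 0

/-- A two-qubit state `ρ` satisfies `⟨u⊗u|ρ|u⊗u⟩ = 0` for every unit
vector `u ∈ ℂ²` if and only if `ρ = |ψ⁻⟩⟨ψ⁻|`: the singlet is the unique two-qubit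
state for which the same von Neumann measurement on each qubit always yields
different outcomes. -/
theorem stmt4 (ρ : Matrix (Fin 2 × Fin 2) (Fin 2 × Fin 2) ℂ) (hρ : IsState ρ) :
    (∀ u : Fin 2 → ℂ, IsUnitVec u →
      star (fun x : Fin 2 × Fin 2 => u x.1 * u x.2) ⬝ᵥ
        ρ *ᵥ (fun x : Fin 2 × Fin 2 => u x.1 * u x.2) = 0) ↔
    ρ = outer singlet := by
  obtain ⟨hpsd, htr⟩ := hρ
  have herm := hpsd.1
  have hc : ((Real.sqrt 2 : ℂ))⁻¹ * ((Real.sqrt 2 : ℂ))⁻¹ = 1/2 := by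
    rw [← mul_inv]; norm_cast
    rw [Real.mul_self_sqrt (by norm_num)]; norm_num
  have hcs : star ((Real.sqrt 2 : ℂ))⁻¹ = ((Real.sqrt 2 : ℂ))⁻¹ := by
    simp [← Complex.ofReal_inv, Complex.star_def]
  constructor
  · intro h
    have hu0 : IsUnitVec (fun i : Fin 2 => if i = 0 then (1:ℂ) else 0) := by
      simp [IsUnitVec, Fin.sum_univ_two]
    have h0 := (hpsd.dotProduct_mulVec_zero_iff _).mp (h _ hu0)
    have hu1 : IsUnitVec (fun i : Fin 2 => if i = 1 then (1:ℂ) else 0) := by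
      simp [IsUnitVec, Fin.sum_univ_two]
    have h1 := (hpsd.dotProduct_mulVec_zero_iff _).mp (h _ hu1)
    have hu2 : IsUnitVec (fun _ : Fin 2 => ((Real.sqrt 2 : ℂ))⁻¹) := by
      simp only [IsUnitVec, Fin.sum_univ_two, hcs, hc]; norm_num
    have h2 := (hpsd.dotProduct_mulVec_zero_iff _).mp (h _ hu2)
    have col00 : ∀ x, ρ x (0,0) = 0 := by
      intro x
      have := congrFun h0 x
      simpa [mulVec, dotProduct, Fintype.sum_prod_type, Fin.sum_univ_two] using this
    have col11 : ∀ x, ρ x (1,1) = 0 := by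
      intro x
      have := congrFun h1 x
      simpa [mulVec, dotProduct, Fintype.sum_prod_type, Fin.sum_univ_two] using this
    have colS : ∀ x, ρ x (0,1) + ρ x (1,0) = 0 := by
      intro x
      have hx := congrFun h2 x
      simp only [mulVec, dotProduct, Fintype.sum_prod_type, Fin.sum_univ_two, hc,
        Pi.zero_apply] at hx
      rw [col00 x, col11 x] at hx
      linear_combination 2 * hx
    have hH : ∀ x y, star (ρ y x) = ρ x y := fun x y => herm.apply x y
    have row00 : ∀ y, ρ (0,0) y = 0 := by
      intro y; rw [← hH, col00]; simp
    have row11 : ∀ y, ρ (1,1) y = 0 := by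
      intro y; rw [← hH, col11]; simp
    have htr' : ρ (0,0) (0,0) + ρ (0,1) (0,1) + ρ (1,0) (1,0) + ρ (1,1) (1,1) = 1 := by
      simpa [Matrix.trace, Matrix.diag, Fintype.sum_prod_type, Fin.sum_univ_two, add_assoc]
        using htr
    have d1 := colS (0,1)
    have d2 := colS (1,0)
    have hreal : star (ρ (0,1) (0,1)) = ρ (0,1) (0,1) := hH _ _
    have e0110 : ρ (0,1) (1,0) = -ρ (0,1) (0,1) := by linear_combination d1
    have e1001 : ρ (1,0) (0,1) = -ρ (0,1) (0,1) := by
      rw [← hH (1,0) (0,1), e0110, star_neg, hreal]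
    have e1010 : ρ (1,0) (1,0) = ρ (0,1) (0,1) := by linear_combination d2 - e1001
    have ha : ρ (0,1) (0,1) = 1/2 := by
      have := htr'
      rw [col00, col11, e1010] at this
      linear_combination this / 2
    have hb : ρ (0,1) (1,0) = -(1/2) := by rw [e0110, ha]
    have hbb : ρ (1,0) (0,1) = -(1/2) := by rw [e1001, ha]
    have hd : ρ (1,0) (1,0) = 1/2 := by rw [e1010, ha]
    funext x y
    have hx : x = (0,0) ∨ x = (0,1) ∨ x = (1,0) ∨ x = (1,1) := by
      rcases x with ⟨i, j⟩; fin_cases i <;> fin_cases j <;> simp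
    have hy : y = (0,0) ∨ y = (0,1) ∨ y = (1,0) ∨ y = (1,1) := by
      rcases y with ⟨i, j⟩; fin_cases i <;> fin_cases j <;> simp
    have c00 : ∀ x, ρ x 0 = 0 := col00
    have c11 : ∀ x, ρ x 1 = 0 := col11
    have r00 : ∀ y, ρ 0 y = 0 := row00
    have r11 : ∀ y, ρ 1 y = 0 := row11
    have souter : ∀ x y, outer singlet x y = singlet x * star (singlet y) := fun _ _ => rfl
    rcases hx with rfl | rfl | rfl | rfl <;> rcases hy with rfl | rfl | rfl | rfl <;>
      simp only [souter, singlet, hcs] <;>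
      norm_num [Prod.ext_iff, col00, col11, row00, row11, c00, c11, r00, r11, ha, hb, hbb, hd, hc, hcs]
  · intro h u hu
    subst h
    have hinner : (∑ y : Fin 2 × Fin 2, star (singlet y) * (u y.1 * u y.2)) = 0 := by
      simp only [Fintype.sum_prod_type, Fin.sum_univ_two, singlet]
      norm_num [Prod.ext_iff, hcs]
      ring
    have hz : (outer singlet) *ᵥ (fun x : Fin 2 × Fin 2 => u x.1 * u x.2) = 0 := by
      funext x
      simp only [mulVec, dotProduct, outer, Matrix.of_apply, mul_assoc, ← Finset.mul_sum]
      rw [hinner, mul_zero]; rfl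
    rw [hz, dotProduct_zero]
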